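/- For all n ≥ 2, the number of (unordered) paths between distinct vertices, summed over all plane trees on n vertices, equals the total number of edges in all vertical paths in all plane trees on n vertices; both equal binom(n,2)·C(n-1). -/

import Mathlib

inductive PlaneTree : Type where
  | node : List PlaneTree → PlaneTree

namespace PlaneTree

mutual
def size : PlaneTree → ℕ
  | .node ts => 1 + sizeList ts
def sizeList : List PlaneTree → ℕ
  | [] => 0
  | t :: ts => size t + sizeList ts
end

mutual
def positions : PlaneTree → List (List ℕ)
  | .node ts => [] :: positionsList 0 ts
def positionsList : ℕ → List PlaneTree → List (List ℕ)
  | _, [] => []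
  | i, t :: ts => (positions t).map (i :: ·) ++ positionsList (i+1) ts
end

mutual
def leafPositions : PlaneTree → List (List ℕ)
  | .node [] => [[]]
  | .node (t :: ts) => leafList 0 (t :: ts)
def leafList : ℕ → List PlaneTree → List (List ℕ)
  | _, [] => []
  | i, t :: ts => (leafPositions t).map (i :: ·) ++ leafList (i+1) ts
end

def isPrefixB : List ℕ → List ℕ → Bool
  | [], _ => true
  | _ :: _, [] => false
  | a :: as, b :: bs => a == b && isPrefixB as bs

def lcpLen : List ℕ → List ℕ → ℕ
  | a :: as, b :: bs => if a = b then 1 + lcpLen as bs else 0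
  | _, _ => 0

/-- number of edges on the path between two vertices given by positions -/
def pathDist (p q : List ℕ) : ℕ :=
  (p.length - lcpLen p q) + (q.length - lcpLen p q)

/-- number of vertical paths (vertex, proper descendant) in a tree -/
def verticalPairs (T : PlaneTree) : ℕ :=
  ((positions T).map (fun q =>
    ((positions T).filter (fun p => p != q && isPrefixB p q)).length)).sum

/-- total number of edges over all vertical paths in a tree -/
def verticalEdges (T : PlaneTree) : ℕ :=
  ((positions T).map (fun q =>
    (((positions T).filter (fun p => p != q && isPrefixB p q)).map
      (fun p => q.length - p.length)).sum)).sum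

/-- number of (unordered) paths between distinct vertices -/
def pathCount (T : PlaneTree) : ℕ := ((positions T).sublistsLen 2).length

/-- Wiener index: sum of distances over unordered pairs of distinct vertices -/
def wiener (T : PlaneTree) : ℕ :=
  (((positions T).sublistsLen 2).map (fun l =>
    match l with
    | [p, q] => pathDist p q
    | _ => 0)).sum

end PlaneTree



namespace PlaneTree

/-! ### basic structural lemmas -/

lemma size_node (ts : List PlaneTree) : size (node ts) = 1 + sizeList ts := by
  rw [size]

lemma sizeList_cons (t : PlaneTree) (ts : List PlaneTree) :
    sizeList (t :: ts) = size t + sizeList ts := by rw [sizeList]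

lemma sizeList_nil : sizeList [] = 0 := by rw [sizeList]

lemma one_le_size (t : PlaneTree) : 1 ≤ size t := by
  cases t with
  | node ts => rw [size_node]; omega

lemma size_le_sizeList {t : PlaneTree} {ts : List PlaneTree} (h : t ∈ ts) :
    size t ≤ sizeList ts := by
  induction ts with
  | nil => simp at h
  | cons a l ih =>
    rw [sizeList_cons]
    rcases List.mem_cons.1 h with h | h
    · subst h; omega
    · have := ih h; omega

lemma size_lt_of_mem {t : PlaneTree} {ts : List PlaneTree} (h : t ∈ ts) :
    size t < size (node ts) := by
  rw [size_node]
  have := size_le_sizeList h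
  omega

/-- structural induction principle -/
lemma tree_ind (P : PlaneTree → Prop)
    (h : ∀ ts : List PlaneTree, (∀ t ∈ ts, P t) → P (node ts)) : ∀ t, P t := by
  have key : ∀ n, ∀ t : PlaneTree, size t ≤ n → P t := by
    intro n
    induction n with
    | zero => intro t ht; have := one_le_size t; omega
    | succ n ih =>
      intro t ht
      cases t with
      | node ts =>
        refine h ts fun s hs => ih s ?_
        have := size_lt_of_mem hs
        omega
  exact fun t => key (size t) t le_rfl

end PlaneTree
namespace PlaneTree

lemma positions_node (ts : List PlaneTree) :
    positions (node ts) = [] :: positionsList 0 ts := by rw [positions]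

lemma positionsList_nil (i : ℕ) : positionsList i [] = [] := by rw [positionsList]

lemma positionsList_cons (i : ℕ) (t : PlaneTree) (ts : List PlaneTree) :
    positionsList i (t :: ts) = (positions t).map (i :: ·) ++ positionsList (i+1) ts := by
  rw [positionsList]

lemma nil_mem_positions (t : PlaneTree) : [] ∈ positions t := by
  cases t with
  | node ts => rw [positions_node]; exact List.mem_cons_self

lemma head_of_mem_positionsList {q : List ℕ} :
    ∀ (ts : List PlaneTree) (i : ℕ), q ∈ positionsList i ts →
      ∃ j r, i ≤ j ∧ q = j :: r := by
  intro ts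
  induction ts with
  | nil => intro i h; rw [positionsList_nil] at h; simp at h
  | cons t ts ih =>
    intro i h
    rw [positionsList_cons] at h
    rcases List.mem_append.1 h with h | h
    · rcases List.mem_map.1 h with ⟨r, _, rfl⟩
      exact ⟨i, r, le_rfl, rfl⟩
    · rcases ih (i+1) h with ⟨j, r, hj, rfl⟩
      exact ⟨j, r, by omega, rfl⟩

/-- length of positions = size -/
lemma positionsList_length :
    ∀ (ts : List PlaneTree), (∀ t ∈ ts, (positions t).length = size t) →
      ∀ i, (positionsList i ts).length = sizeList ts := by
  intro ts
  induction ts with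
  | nil => intro _ i; rw [positionsList_nil, sizeList_nil]; rfl
  | cons t ts ih =>
    intro h i
    rw [positionsList_cons, sizeList_cons, List.length_append, List.length_map,
      h t (List.mem_cons_self), ih (fun s hs => h s (List.mem_cons_of_mem _ hs)) (i+1)]

lemma positions_length (t : PlaneTree) : (positions t).length = size t := by
  induction t using tree_ind with
  | h ts ih =>
    rw [positions_node, size_node, List.length_cons, positionsList_length ts ih 0]
    omega

/-- nodup -/
lemma positionsList_nodup :
    ∀ (ts : List PlaneTree), (∀ t ∈ ts, (positions t).Nodup) →
      ∀ i, (positionsList i ts).Nodup := by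
  intro ts
  induction ts with
  | nil => intro _ i; rw [positionsList_nil]; exact List.nodup_nil
  | cons t ts ih =>
    intro h i
    rw [positionsList_cons]
    refine List.Nodup.append ?_ (ih (fun s hs => h s (List.mem_cons_of_mem _ hs)) (i+1)) ?_
    · exact (h t (List.mem_cons_self)).map (fun a b hab => by
        simpa using hab)
    · intro q hq hq'
      rcases List.mem_map.1 hq with ⟨r, _, rfl⟩
      rcases head_of_mem_positionsList ts (i+1) hq' with ⟨j, r', hj, hEq⟩
      have : i = j := (List.cons_eq_cons.1 hEq).1
      omega

lemma positions_nodup (t : PlaneTree) : (positions t).Nodup := by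
  induction t using tree_ind with
  | h ts ih =>
    rw [positions_node]
    refine List.nodup_cons.2 ⟨?_, positionsList_nodup ts ih 0⟩
    intro h
    rcases head_of_mem_positionsList ts 0 h with ⟨j, r, _, hEq⟩
    simp at hEq

/-- prefix closedness -/
lemma positionsList_prefix_closed :
    ∀ (ts : List PlaneTree),
      (∀ t ∈ ts, ∀ p q : List ℕ, q ∈ positions t → p <+: q → p ∈ positions t) →
      ∀ (i j : ℕ) (p' q' : List ℕ), (j :: q') ∈ positionsList i ts → p' <+: q' →
        (j :: p') ∈ positionsList i ts := by
  intro ts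
  induction ts with
  | nil => intro _ i j p' q' h; rw [positionsList_nil] at h; simp at h
  | cons t ts ih =>
    intro h i j p' q' hq hpre
    rw [positionsList_cons] at hq ⊢
    rcases List.mem_append.1 hq with hq | hq
    · rcases List.mem_map.1 hq with ⟨r, hr, hEq⟩
      obtain ⟨h1, h2⟩ := List.cons_eq_cons.1 hEq
      subst h1
      subst h2
      exact List.mem_append.2 (Or.inl (List.mem_map.2
        ⟨p', h t (List.mem_cons_self) p' _ hr hpre, rfl⟩))
    · exact List.mem_append.2 (Or.inr
        (ih (fun s hs => h s (List.mem_cons_of_mem _ hs)) (i+1) j p' q' hq hpre))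

lemma positions_prefix_closed (t : PlaneTree) :
    ∀ p q : List ℕ, q ∈ positions t → p <+: q → p ∈ positions t := by
  induction t using tree_ind with
  | h ts ih =>
    intro p q hq hpre
    rw [positions_node] at hq ⊢
    rcases List.mem_cons.1 hq with rfl | hq
    · rw [List.prefix_nil.1 hpre]; exact List.mem_cons_self
    · rcases head_of_mem_positionsList ts 0 hq with ⟨j, r, _, rfl⟩
      cases p with
      | nil => exact List.mem_cons_self
      | cons a p' =>
        rcases List.cons_prefix_cons.1 hpre with ⟨rfl, hpre'⟩
        exact List.mem_cons_of_mem _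
          (positionsList_prefix_closed ts ih 0 a p' r hq hpre')

lemma isPrefixB_iff (p q : List ℕ) : isPrefixB p q = true ↔ p <+: q := by
  induction p generalizing q with
  | nil =>
    rw [show isPrefixB [] q = true from rfl]
    simp
  | cons a as ih =>
    cases q with
    | nil =>
      rw [show isPrefixB (a :: as) [] = false from rfl]
      simp
    | cons b bs =>
      rw [isPrefixB, Bool.and_eq_true, beq_iff_eq, ih, List.cons_prefix_cons]

end PlaneTree
namespace PlaneTree

/-! ### depth sums -/

def dep (t : PlaneTree) : ℕ := ((positions t).map List.length).sum
def dep2 (t : PlaneTree) : ℕ := ((positions t).map (fun p => p.length * p.length)).sum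

lemma list_sum_map_add {α : Type*} (l : List α) (f g : α → ℕ) :
    (l.map fun x => f x + g x).sum = (l.map f).sum + (l.map g).sum := by
  induction l with
  | nil => simp
  | cons a l ih => simp [ih]; ring

lemma list_sum_map_mul {α : Type*} (c : ℕ) (l : List α) (f : α → ℕ) :
    (l.map fun x => c * f x).sum = c * (l.map f).sum := by
  induction l with
  | nil => simp
  | cons a l ih => simp [ih]; ring

lemma list_sum_map_congr {α β : Type*} [AddMonoid β] {l : List α} {f g : α → β}
    (h : ∀ x ∈ l, f x = g x) : (l.map f).sum = (l.map g).sum := by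
  rw [List.map_congr_left h]

lemma list_range_sum {M : Type*} [AddCommMonoid M] (f : ℕ → M) (n : ℕ) :
    ((List.range n).map f).sum = ∑ i ∈ Finset.range n, f i := by
  induction n with
  | zero => simp
  | succ n ih => rw [List.range_succ, Finset.sum_range_succ, List.map_append, List.sum_append, ih]; simp

lemma dsum_eq (d : ℕ) : 2 * (∑ i ∈ Finset.range d, (d - i)) = d * d + d := by
  induction d with
  | zero => simp
  | succ d ih =>
    rw [Finset.sum_range_succ']
    have : ∑ i ∈ Finset.range d, (d + 1 - (i + 1)) = ∑ i ∈ Finset.range d, (d - i) :=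
      Finset.sum_congr rfl fun i _ => by omega
    rw [this]
    have h2 : (d+1)*(d+1)+(d+1) = d*d+d + (2*d+2) := by ring
    omega

lemma filter_prefixes_perm {T : PlaneTree} {q : List ℕ} (hq : q ∈ positions T) :
    ((positions T).filter (fun p => p != q && isPrefixB p q)).Perm
      ((List.range q.length).map (q.take ·)) := by
  rw [List.perm_ext_iff_of_nodup]
  · intro a
    rw [List.mem_filter, List.mem_map]
    constructor
    · rintro ⟨ha, hcond⟩
      rw [Bool.and_eq_true, bne_iff_ne, isPrefixB_iff] at hcond
      obtain ⟨hne, hpre⟩ := hcond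
      refine ⟨a.length, List.mem_range.2 ?_, (List.prefix_iff_eq_take.1 hpre).symm⟩
      have hle := hpre.length_le
      rcases lt_or_eq_of_le hle with h | h
      · exact h
      · exact absurd (hpre.eq_of_length h) hne
    · rintro ⟨i, hi, rfl⟩
      rw [List.mem_range] at hi
      have hpre : q.take i <+: q := List.take_prefix i q
      have hlen : (q.take i).length = i := by
        rw [List.length_take]; omega
      refine ⟨positions_prefix_closed T _ q hq hpre, ?_⟩
      rw [Bool.and_eq_true, bne_iff_ne, isPrefixB_iff]
      exact ⟨fun h => by rw [h] at hlen; omega, hpre⟩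
  · exact (positions_nodup T).filter _
  · refine List.Nodup.map_on ?_ (List.nodup_range)
    intro i hi j hj hEq
    rw [List.mem_range] at hi hj
    have h1 : (q.take i).length = i := by rw [List.length_take]; omega
    have h2 : (q.take j).length = j := by rw [List.length_take]; omega
    rw [← h1, ← h2, hEq]

lemma two_mul_verticalEdges (T : PlaneTree) :
    2 * verticalEdges T = dep2 T + dep T := by
  rw [verticalEdges, dep2, dep, ← list_sum_map_add, ← list_sum_map_mul]
  refine list_sum_map_congr fun q hq => ?_
  have hperm := (filter_prefixes_perm hq).map (fun p => q.length - p.length)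
  rw [hperm.sum_eq, List.map_map]
  have : ((List.range q.length).map ((fun p => q.length - p.length) ∘ (q.take ·))).sum
      = ∑ i ∈ Finset.range q.length, (q.length - i) := by
    rw [← list_range_sum]
    refine list_sum_map_congr fun i hi => ?_
    rw [List.mem_range] at hi
    simp only [Function.comp]
    rw [List.length_take]
    omega
  rw [this, dsum_eq]

end PlaneTree
namespace PlaneTree

lemma positionsList_dep :
    ∀ (ts : List PlaneTree) (i : ℕ),
      ((positionsList i ts).map List.length).sum = (ts.map fun t => dep t + size t).sum := by
  intro ts
  induction ts with
  | nil => intro i; rw [positionsList_nil]; simp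
  | cons t ts ih =>
    intro i
    rw [positionsList_cons, List.map_append, List.sum_append, ih (i+1), List.map_cons,
      List.sum_cons, List.map_map]
    congr 1
    have : ((positions t).map (List.length ∘ (i :: ·))).sum
        = ((positions t).map (fun p => p.length + 1)).sum := by
      refine list_sum_map_congr fun p _ => ?_
      simp [Function.comp]
    rw [this, list_sum_map_add]
    simp [dep, positions_length, Nat.add_comm]

lemma dep_node (ts : List PlaneTree) :
    dep (node ts) = (ts.map fun t => dep t + size t).sum := by
  rw [dep, positions_node, List.map_cons, List.sum_cons, positionsList_dep ts 0]
  simp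

lemma positionsList_dep2 :
    ∀ (ts : List PlaneTree) (i : ℕ),
      ((positionsList i ts).map (fun p => p.length * p.length)).sum
        = (ts.map fun t => dep2 t + 2 * dep t + size t).sum := by
  intro ts
  induction ts with
  | nil => intro i; rw [positionsList_nil]; simp
  | cons t ts ih =>
    intro i
    rw [positionsList_cons, List.map_append, List.sum_append, ih (i+1), List.map_cons,
      List.sum_cons, List.map_map]
    congr 1
    have : ((positions t).map ((fun p : List ℕ => p.length * p.length) ∘ (i :: ·))).sum
        = ((positions t).map (fun p => (p.length * p.length) + (2 * p.length + 1))).sum := by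
      refine list_sum_map_congr fun p _ => ?_
      simp only [Function.comp, List.length_cons]
      ring
    rw [this, list_sum_map_add, list_sum_map_add, list_sum_map_mul]
    have hone : ((positions t).map (fun _ : List ℕ => 1)).sum = size t := by
      have h := positions_length t
      simp only [List.map_const']
      rw [List.sum_replicate, smul_eq_mul, mul_one, h]
    rw [hone,
      show ((positions t).map (fun p : List ℕ => p.length * p.length)).sum = dep2 t from rfl,
      show ((positions t).map (fun p : List ℕ => p.length)).sum = dep t from rfl]
    omega

lemma dep2_node (ts : List PlaneTree) :
    dep2 (node ts) = (ts.map fun t => dep2 t + 2 * dep t + size t).sum := by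
  rw [dep2, positions_node, List.map_cons, List.sum_cons, positionsList_dep2 ts 0]
  simp

lemma pathCount_eq (T : PlaneTree) : pathCount T = (size T).choose 2 := by
  rw [pathCount, List.length_sublistsLen, positions_length]


end PlaneTree
namespace PlaneTree

/-! ### enumeration of all forests/trees of a given size -/

def allForests : ℕ → List (List PlaneTree)
  | 0 => [[]]
  | (m+1) =>
    (List.range (m+1)).attach.flatMap (fun k =>
      (allForests k.1).flatMap (fun G => (allForests (m - k.1)).map (fun F => node G :: F)))
decreasing_by
  · have := List.mem_range.1 k.2; omega
  · have := List.mem_range.1 k.2; omega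

def allTrees : ℕ → List PlaneTree
  | 0 => []
  | (m+1) => (allForests m).map node

lemma sizeList_eq_zero {F : List PlaneTree} (h : sizeList F = 0) : F = [] := by
  cases F with
  | nil => rfl
  | cons t ts => rw [sizeList_cons] at h; have := one_le_size t; omega

lemma mem_allForests : ∀ (m : ℕ) (F : List PlaneTree), F ∈ allForests m ↔ sizeList F = m := by
  intro m
  induction m using Nat.strong_induction_on with
  | _ m ih =>
    match m with
    | 0 =>
      intro F
      rw [allForests]
      simp only [List.mem_singleton]
      constructor
      · rintro rfl; rw [sizeList_nil]
      · exact sizeList_eq_zero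
    | (m+1) =>
      intro F
      rw [allForests]
      rw [List.mem_flatMap]
      constructor
      · rintro ⟨k, -, hk⟩
        rw [List.mem_flatMap] at hk
        obtain ⟨G, hG, hF⟩ := hk
        rw [List.mem_map] at hF
        obtain ⟨F', hF', rfl⟩ := hF
        have hkr := List.mem_range.1 k.2
        have h1 : sizeList G = k.1 := (ih k.1 (by omega) G).1 hG
        have h2 : sizeList F' = m - k.1 := (ih (m - k.1) (by omega) F').1 hF'
        rw [sizeList_cons, size_node, h1, h2]
        omega
      · intro hF
        match F with
        | [] => rw [sizeList_nil] at hF; omega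
        | (node G) :: F' =>
          rw [sizeList_cons, size_node] at hF
          set k := sizeList G with hk
          have hkm : k ≤ m := by omega
          refine ⟨⟨k, List.mem_range.2 (by omega)⟩, List.mem_attach _ _, ?_⟩
          rw [List.mem_flatMap]
          refine ⟨G, (ih k (by omega) G).2 rfl, ?_⟩
          rw [List.mem_map]
          exact ⟨F', (ih (m - k) (by omega) F').2 (by omega), rfl⟩

lemma mem_allTrees (n : ℕ) (T : PlaneTree) : T ∈ allTrees n ↔ size T = n := by
  match n with
  | 0 =>
    rw [allTrees]
    simp only [List.not_mem_nil, false_iff]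
    have := one_le_size T
    omega
  | (m+1) =>
    rw [allTrees, List.mem_map]
    constructor
    · rintro ⟨G, hG, rfl⟩
      rw [size_node, (mem_allForests m G).1 hG]
      omega
    · intro hT
      match T with
      | node G =>
        rw [size_node] at hT
        exact ⟨G, (mem_allForests m G).2 (by omega), rfl⟩

lemma nodup_allForests : ∀ m : ℕ, (allForests m).Nodup := by
  intro m
  induction m using Nat.strong_induction_on with
  | _ m ih =>
    match m with
    | 0 => rw [allForests]; simp
    | (m+1) =>
      rw [allForests]
      rw [List.nodup_flatMap]
      constructor
      · rintro ⟨k, hk⟩ -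
        have hkr := List.mem_range.1 hk
        rw [List.nodup_flatMap]
        constructor
        · intro G hG
          refine (ih (m - k) (by omega)).map ?_
          intro F F' hFF
          exact (List.cons_eq_cons.1 hFF).2
        · refine (ih k (by omega)).imp ?_
          intro G G' hne
          intro F hF hF'
          rw [List.mem_map] at hF hF'
          obtain ⟨F1, -, rfl⟩ := hF
          obtain ⟨F2, -, hEq⟩ := hF'
          obtain ⟨h1, -⟩ := List.cons_eq_cons.1 hEq
          exact hne (by injection h1.symm)
      · have hatt : (List.range (m+1)).attach.Nodup :=
          List.nodup_attach.2 (List.nodup_range)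
        refine hatt.imp ?_
        intro k k' hne F hF hF'
        rw [List.mem_flatMap] at hF hF'
        obtain ⟨G, hG, hF⟩ := hF
        obtain ⟨G', hG', hF'⟩ := hF'
        rw [List.mem_map] at hF hF'
        obtain ⟨F1, -, rfl⟩ := hF
        obtain ⟨F2, -, hEq⟩ := hF'
        obtain ⟨h1, -⟩ := List.cons_eq_cons.1 hEq
        have hG1 : sizeList G = k.1 := (mem_allForests _ _).1 hG
        have hG2 : sizeList G' = k'.1 := (mem_allForests _ _).1 hG'
        have hGG : G' = G := by injection h1
        apply hne
        apply Subtype.ext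
        rw [← hG1, ← hG2, hGG]

lemma nodup_allTrees (n : ℕ) : (allTrees n).Nodup := by
  match n with
  | 0 => rw [allTrees]; exact List.nodup_nil
  | (m+1) =>
    rw [allTrees]
    exact (nodup_allForests m).map fun a b h => by injection h

end PlaneTree
namespace PlaneTree

/-! ### summing over all forests -/

lemma list_sum_flatMap {α β : Type*} (l : List α) (f : α → List β) (h : β → ℕ) :
    ((l.flatMap f).map h).sum = (l.map (fun a => ((f a).map h).sum)).sum := by
  induction l with
  | nil => simp
  | cons a l ih => simp [List.flatMap_cons, ih]

lemma list_sum_map_const {α : Type*} (l : List α) (c : ℕ) :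
    (l.map fun _ => c).sum = l.length * c := by
  induction l with
  | nil => simp
  | cons a l ih => simp [ih]; ring

/-- generic sum over `allForests (m+1)` -/
lemma sum_allForests_succ (h : List PlaneTree → ℕ) (m : ℕ) :
    ((allForests (m+1)).map h).sum
      = ∑ k ∈ Finset.range (m+1), ((allForests k).map (fun G =>
          ((allForests (m-k)).map (fun F => h (node G :: F))).sum)).sum := by
  rw [allForests]
  rw [list_sum_flatMap]
  have : ∀ k : {x // x ∈ List.range (m+1)},
      (((allForests k.1).flatMap (fun G => (allForests (m - k.1)).map
        (fun F => node G :: F))).map h).sum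
      = ((allForests k.1).map (fun G =>
          ((allForests (m-k.1)).map (fun F => h (node G :: F))).sum)).sum := by
    intro k
    rw [list_sum_flatMap]
    refine list_sum_map_congr fun G _ => ?_
    rw [List.map_map]
    rfl
  rw [list_sum_map_congr (fun k _ => this k)]
  have h2 : (List.range (m+1)).attach.map
      (fun k : {x // x ∈ List.range (m+1)} =>
        ((allForests k.1).map (fun G =>
          ((allForests (m-k.1)).map (fun F => h (node G :: F))).sum)).sum)
      = (List.range (m+1)).map
      (fun k => ((allForests k).map (fun G =>
        ((allForests (m-k)).map (fun F => h (node G :: F))).sum)).sum) :=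
    List.attach_map_val (l := List.range (m+1))
      (f := fun k => ((allForests k).map (fun G =>
        ((allForests (m-k)).map (fun F => h (node G :: F))).sum)).sum)
  rw [h2, list_range_sum]

end PlaneTree
namespace PlaneTree

/-! ### the three forest statistics -/

def fdep (F : List PlaneTree) : ℕ := (F.map fun t => dep t + size t).sum
def fdep2 (F : List PlaneTree) : ℕ := (F.map fun t => dep2 t + 2 * dep t + size t).sum
def cnt (m : ℕ) : ℕ := (allForests m).length
def FS (m : ℕ) : ℕ := ((allForests m).map fdep).sum
def FV (m : ℕ) : ℕ := ((allForests m).map fdep2).sum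

lemma allForests_zero : allForests 0 = [[]] := by rw [allForests]

lemma cnt_zero : cnt 0 = 1 := by rw [cnt, allForests_zero]; rfl
lemma FS_zero : FS 0 = 0 := by rw [FS, allForests_zero]; simp [fdep]
lemma FV_zero : FV 0 = 0 := by rw [FV, allForests_zero]; simp [fdep2]

lemma fdep_cons_node {k : ℕ} {G : List PlaneTree} (hG : G ∈ allForests k) (F : List PlaneTree) :
    fdep (node G :: F) = (fdep G + (k + 1)) + fdep F := by
  have hs : sizeList G = k := (mem_allForests _ _).1 hG
  rw [fdep, List.map_cons, List.sum_cons, dep_node, size_node, hs]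
  rw [fdep, fdep]
  ring

lemma fdep2_cons_node {k : ℕ} {G : List PlaneTree} (hG : G ∈ allForests k) (F : List PlaneTree) :
    fdep2 (node G :: F) = (fdep2 G + 2 * fdep G + (k + 1)) + fdep2 F := by
  have hs : sizeList G = k := (mem_allForests _ _).1 hG
  rw [fdep2, List.map_cons, List.sum_cons, dep2_node, dep_node, size_node, hs]
  rw [fdep2, fdep2, fdep]
  ring

lemma cnt_succ (m : ℕ) :
    cnt (m+1) = ∑ k ∈ Finset.range (m+1), cnt k * cnt (m-k) := by
  have h1 : cnt (m+1) = ((allForests (m+1)).map (fun _ => 1)).sum := by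
    rw [list_sum_map_const, cnt, mul_one]
  rw [h1, sum_allForests_succ (fun _ => 1) m]
  refine Finset.sum_congr rfl fun k _ => ?_
  have inner : ∀ G ∈ allForests k,
      ((allForests (m-k)).map (fun _ : List PlaneTree => 1)).sum = cnt (m-k) := by
    intro G _
    rw [list_sum_map_const, mul_one]
    rfl
  rw [list_sum_map_congr inner, list_sum_map_const]
  rfl

lemma FS_succ (m : ℕ) :
    FS (m+1) = ∑ k ∈ Finset.range (m+1),
      (cnt (m-k) * FS k + (k+1) * (cnt k * cnt (m-k)) + cnt k * FS (m-k)) := by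
  rw [FS, sum_allForests_succ fdep m]
  refine Finset.sum_congr rfl fun k _ => ?_
  have inner : ∀ G ∈ allForests k,
      ((allForests (m-k)).map (fun F => fdep (node G :: F))).sum
        = (cnt (m-k) * fdep G + (k+1) * cnt (m-k)) + FS (m-k) := by
    intro G hG
    rw [list_sum_map_congr (fun F _ => fdep_cons_node hG F)]
    rw [list_sum_map_add, list_sum_map_const]
    simp only [cnt, FS]
    ring
  rw [list_sum_map_congr inner, list_sum_map_add, list_sum_map_add, list_sum_map_mul,
    list_sum_map_const, list_sum_map_const]
  simp only [cnt, FS]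
  ring

lemma FV_succ (m : ℕ) :
    FV (m+1) = ∑ k ∈ Finset.range (m+1),
      (cnt (m-k) * FV k + 2 * (cnt (m-k) * FS k) + (k+1) * (cnt k * cnt (m-k))
        + cnt k * FV (m-k)) := by
  rw [FV, sum_allForests_succ fdep2 m]
  refine Finset.sum_congr rfl fun k _ => ?_
  have inner : ∀ G ∈ allForests k,
      ((allForests (m-k)).map (fun F => fdep2 (node G :: F))).sum
        = (cnt (m-k) * fdep2 G + cnt (m-k) * (2 * fdep G) + (k+1) * cnt (m-k)) + FV (m-k) := by
    intro G hG
    rw [list_sum_map_congr (fun F _ => fdep2_cons_node hG F)]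
    rw [list_sum_map_add, list_sum_map_const]
    simp only [cnt, FV]
    ring
  rw [list_sum_map_congr inner, list_sum_map_add, list_sum_map_add, list_sum_map_add,
    list_sum_map_mul, list_sum_map_mul, list_sum_map_const, list_sum_map_const]
  have hmul : ((allForests k).map (fun G => 2 * fdep G)).sum = 2 * FS k := by
    rw [list_sum_map_mul]; rfl
  rw [hmul]
  simp only [cnt, FS, FV]
  ring

lemma cnt_eq_catalan : ∀ m, cnt m = catalan m := by
  intro m
  induction m using Nat.strong_induction_on with
  | _ m ih =>
    match m with
    | 0 => rw [cnt_zero, catalan_zero]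
    | (m+1) =>
      rw [cnt_succ, catalan_succ,
        show (∑ i : Fin m.succ, catalan i * catalan (m - i))
          = ∑ k ∈ Finset.range (m+1), catalan k * catalan (m-k) from
          Fin.sum_univ_eq_sum_range (fun k => catalan k * catalan (m-k)) (m+1)]
      refine Finset.sum_congr rfl fun k hk => ?_
      rw [Finset.mem_range] at hk
      rw [ih k (by omega), ih (m-k) (by omega)]

end PlaneTree
namespace PlaneTree

/-! ### rational closed forms -/

noncomputable def cb (k : ℕ) : ℚ := (Nat.centralBinom k : ℚ)
noncomputable def ct (k : ℕ) : ℚ := (catalan k : ℚ)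
noncomputable def Aq (m : ℕ) : ℚ := ∑ k ∈ Finset.range (m+1), (4:ℚ)^k * ct (m-k)
noncomputable def Gq (m : ℕ) : ℚ := ∑ c ∈ Finset.range (m+1), (c:ℚ) * cb c * ct (m-c)

lemma cb_eq_ct (k : ℕ) : cb k = ((k:ℚ)+1) * ct k := by
  have h := succ_mul_catalan_eq_centralBinom k
  rw [cb, ct, ← h]
  push_cast
  ring

lemma cb_succ (k : ℕ) : cb (k+1) = 4 * cb k - 2 * ct k := by
  have h1 : ((k:ℚ)+1) * cb (k+1) = 2*(2*(k:ℚ)+1) * cb k := by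
    have := Nat.succ_mul_centralBinom_succ k
    rw [cb, cb]
    exact_mod_cast congrArg (fun x : ℕ => (x:ℚ)) this
  have h2 : cb k = ((k:ℚ)+1) * ct k := cb_eq_ct k
  have hk : ((k:ℚ)+1) ≠ 0 := by positivity
  apply mul_left_cancel₀ hk
  linear_combination h1 - 2*h2

lemma ct_zero : ct 0 = 1 := by rw [ct, catalan_zero]; norm_num
lemma cb_zero : cb 0 = 1 := by rw [cb, Nat.centralBinom_zero]; norm_num
lemma cb_one : cb 1 = 2 := by rw [cb]; norm_num [Nat.centralBinom]

lemma ct_cast (k : ℕ) : (catalan k : ℚ) = ct k := rfl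

lemma Aq_eq (m : ℕ) : Aq m = ((4:ℚ)^(m+1) - cb (m+1))/2 := by
  induction m with
  | zero =>
    rw [Aq]
    simp [ct_zero, cb_one]
    norm_num
  | succ m ih =>
    have step : Aq (m+1) = 4 * Aq m + ct (m+1) := by
      rw [Aq, Finset.sum_range_succ']
      have : ∀ k ∈ Finset.range (m+1),
          (4:ℚ)^(k+1) * ct (m+1-(k+1)) = 4 * ((4:ℚ)^k * ct (m-k)) := by
        intro k _
        rw [Nat.succ_sub_succ]
        ring
      rw [Finset.sum_congr rfl this, ← Finset.mul_sum, ← Aq]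
      simp
    rw [step, ih, cb_succ (m+1)]
    ring

lemma conv_rev (a b : ℕ → ℚ) (m : ℕ) :
    ∑ k ∈ Finset.range (m+1), a k * b (m-k)
      = ∑ k ∈ Finset.range (m+1), a (m-k) * b k := by
  rw [← Finset.sum_range_reflect]
  refine Finset.sum_congr rfl fun j hj => ?_
  rw [Finset.mem_range] at hj
  have h1 : m + 1 - 1 - j = m - j := by omega
  have h2 : m - (m - j) = j := by omega
  rw [h1, h2]

lemma tri_swap (n : ℕ) (f : ℕ → ℕ → ℚ) :
    ∑ c ∈ Finset.range n, ∑ i ∈ Finset.range (n - c), f c i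
      = ∑ i ∈ Finset.range n, ∑ c ∈ Finset.range (n - i), f c i :=
  Finset.sum_comm' (by intro x y; simp only [Finset.mem_range]; omega)

lemma catalan_range (M : ℕ) :
    ct (M+1) = ∑ i ∈ Finset.range (M+1), ct i * ct (M-i) := by
  rw [ct, catalan_succ,
    show (∑ i : Fin M.succ, catalan i * catalan (M - i))
      = ∑ k ∈ Finset.range (M+1), catalan k * catalan (M-k) from
      Fin.sum_univ_eq_sum_range (fun k => catalan k * catalan (M-k)) (M+1)]
  push_cast
  rfl

lemma Gq_eq : ∀ m, Gq m = ((m:ℚ)+1) * cb (m+1) / 2 - 4^m := by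
  intro m
  induction m using Nat.strong_induction_on with
  | _ m ih =>
    match m with
    | 0 =>
      rw [Gq]
      simp [cb_one]
    | (M+1) =>
      -- expand the last term and the inner catalans
      have step1 : Gq (M+1) = (((M:ℚ)+1) * cb (M+1))
          + ∑ c ∈ Finset.range (M+1), (c:ℚ) * cb c * ct (M+1-c) := by
        rw [Gq, Finset.sum_range_succ]
        have : (M+1) - (M+1) = 0 := by omega
        rw [this, ct_zero]
        push_cast
        ring
      have step2 : ∑ c ∈ Finset.range (M+1), (c:ℚ) * cb c * ct (M+1-c)
          = ∑ c ∈ Finset.range (M+1), ∑ i ∈ Finset.range (M+1-c),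
              ct i * ((c:ℚ) * cb c * ct (M-c-i)) := by
        refine Finset.sum_congr rfl fun c hc => ?_
        rw [Finset.mem_range] at hc
        have h1 : M+1-c = (M-c)+1 := by omega
        rw [h1, catalan_range (M-c), Finset.mul_sum]
        refine Finset.sum_congr rfl fun i hi => ?_
        ring
      have step3 : ∑ c ∈ Finset.range (M+1), ∑ i ∈ Finset.range (M+1-c),
              ct i * ((c:ℚ) * cb c * ct (M-c-i))
          = ∑ i ∈ Finset.range (M+1), ct i * Gq (M-i) := by
        rw [show (M+1 : ℕ) = M+1 from rfl]
        rw [tri_swap (M+1) (fun c i => ct i * ((c:ℚ) * cb c * ct (M-c-i)))]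
        refine Finset.sum_congr rfl fun i hi => ?_
        rw [Finset.mem_range] at hi
        have h1 : M + 1 - i = (M-i)+1 := by omega
        rw [h1, Gq, Finset.mul_sum]
        refine Finset.sum_congr rfl fun c hc => ?_
        have hsub : M - i - c = M - c - i := by omega
        rw [hsub]
      have step4 : ∑ i ∈ Finset.range (M+1), ct i * Gq (M-i)
          = (∑ i ∈ Finset.range (M+1), ct i * (((M:ℚ)-i+1) * cb (M-i+1))) / 2
            - Aq M := by
        have : ∀ i ∈ Finset.range (M+1),
            ct i * Gq (M-i)
              = ct i * (((M:ℚ)-i+1) * cb (M-i+1)) / 2 - (4:ℚ)^(M-i) * ct i := by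
          intro i hi
          rw [Finset.mem_range] at hi
          rw [ih (M-i) (by omega)]
          have hcast : ((M-i : ℕ) : ℚ) = (M:ℚ) - i := by
            push_cast [Nat.cast_sub (by omega : i ≤ M)]
            ring
          rw [hcast]
          ring
        rw [Finset.sum_congr rfl this, Finset.sum_sub_distrib, ← Finset.sum_div]
        congr 1
        rw [Aq, conv_rev (fun k => (4:ℚ)^k) ct M]
      have step5 : Gq (M+1)
          = ∑ i ∈ Finset.range (M+1), ct i * (((M:ℚ)-i+1) * cb (M-i+1)) := by
        rw [Gq, conv_rev (fun c => (c:ℚ) * cb c) ct (M+1), Finset.sum_range_succ]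
        have hlast : ((M+1-(M+1) : ℕ) : ℚ) * cb (M+1-(M+1)) * ct (M+1) = 0 := by
          have h0 : (M+1) - (M+1) = 0 := by omega
          rw [h0]
          push_cast
          ring
        rw [hlast, add_zero]
        refine Finset.sum_congr rfl fun i hi => ?_
        rw [Finset.mem_range] at hi
        have h1 : M + 1 - i = (M-i)+1 := by omega
        have hcast : ((M+1-i : ℕ) : ℚ) = (M:ℚ) - i + 1 := by
          push_cast [Nat.cast_sub (by omega : i ≤ M + 1)]
          ring
        rw [h1] at hcast
        rw [h1, hcast]
        ring
      -- combine
      have hcomb : Gq (M+1) = (((M:ℚ)+1) * cb (M+1)) + (Gq (M+1) / 2 - Aq M) :=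
        step1.trans (by rw [step2, step3, step4, ← step5])
      have hAq := Aq_eq M
      have hcb := Nat.succ_mul_centralBinom_succ (M+1)
      have hcb' : ((M:ℚ)+2) * cb (M+1+1) = 2*(2*(M:ℚ)+3) * cb (M+1) := by
        rw [cb, cb]
        exact_mod_cast congrArg (fun x : ℕ => (x:ℚ)) hcb
      have hGq : Gq (M+1) = 2*(((M:ℚ)+1) * cb (M+1)) - 2 * Aq M := by
        linarith [hcomb]
      rw [hGq, hAq]
      push_cast
      linear_combination (-1/2 : ℚ) * hcb'
  
end PlaneTree
namespace PlaneTree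

lemma cnt_cast (j : ℕ) : ((cnt j : ℕ) : ℚ) = ct j := by rw [cnt_eq_catalan, ct]

lemma FSq : ∀ m, (FS m : ℚ) = ((4:ℚ)^m - cb m)/2 := by
  intro m
  induction m using Nat.strong_induction_on with
  | _ m ih =>
    match m with
    | 0 => rw [FS_zero, cb_zero]; norm_num
    | (m+1) =>
      rw [FS_succ]
      push_cast
      have hterm : ∀ k ∈ Finset.range (m+1),
          ((cnt (m-k) : ℚ) * (FS k : ℚ) + ((k:ℚ)+1) * ((cnt k : ℚ) * (cnt (m-k) : ℚ))
            + (cnt k : ℚ) * (FS (m-k) : ℚ))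
          = ((4:ℚ)^k/2) * ct (m-k) + ((4:ℚ)^(m-k)/2) * ct k
            + ((cb k/2) * ct (m-k) - (cb (m-k)/2) * ct k) := by
        intro k hk
        rw [Finset.mem_range] at hk
        rw [ih k (by omega), ih (m-k) (by omega), cnt_cast, cnt_cast, cb_eq_ct k, cb_eq_ct (m-k)]
        ring
      rw [Finset.sum_congr rfl hterm, Finset.sum_add_distrib, Finset.sum_add_distrib,
        Finset.sum_sub_distrib]
      have e1 : ∑ k ∈ Finset.range (m+1), ((4:ℚ)^(m-k)/2) * ct k
          = ∑ k ∈ Finset.range (m+1), ((4:ℚ)^k/2) * ct (m-k) :=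
        (conv_rev (fun k => (4:ℚ)^k/2) ct m).symm
      have e2 : ∑ k ∈ Finset.range (m+1), (cb (m-k)/2) * ct k
          = ∑ k ∈ Finset.range (m+1), (cb k/2) * ct (m-k) :=
        (conv_rev (fun k => cb k/2) ct m).symm
      rw [e1, e2, sub_self]
      have hS1 : ∑ k ∈ Finset.range (m+1), ((4:ℚ)^k/2) * ct (m-k) = Aq m / 2 := by
        rw [Aq, Finset.sum_div]
        exact Finset.sum_congr rfl fun k _ => by ring
      rw [hS1, Aq_eq m]
      ring

lemma FVq : ∀ m, (FV m : ℚ) = ((m:ℚ)+1) * cb (m+1) / 4 - (4:ℚ)^m/2 := by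
  intro m
  induction m using Nat.strong_induction_on with
  | _ m ih =>
    match m with
    | 0 => rw [FV_zero, cb_one]; norm_num
    | (m+1) =>
      rw [FV_succ]
      push_cast
      have hterm : ∀ k ∈ Finset.range (m+1),
          ((cnt (m-k) : ℚ) * (FV k : ℚ) + 2 * ((cnt (m-k) : ℚ) * (FS k : ℚ))
            + ((k:ℚ)+1) * ((cnt k : ℚ) * (cnt (m-k) : ℚ))
            + (cnt k : ℚ) * (FV (m-k) : ℚ))
          = (((k:ℚ)+1) * cb (k+1)/4) * ct (m-k)
            + ((((m-k : ℕ):ℚ)+1) * cb ((m-k)+1)/4) * ct k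
            + (((4:ℚ)^k/2) * ct (m-k) - ((4:ℚ)^(m-k)/2) * ct k) := by
        intro k hk
        rw [Finset.mem_range] at hk
        rw [ih k (by omega), ih (m-k) (by omega), FSq k, cnt_cast, cnt_cast, cb_eq_ct k]
        ring
      rw [Finset.sum_congr rfl hterm, Finset.sum_add_distrib, Finset.sum_add_distrib,
        Finset.sum_sub_distrib]
      have e1 : ∑ k ∈ Finset.range (m+1), ((((m-k : ℕ):ℚ)+1) * cb ((m-k)+1)/4) * ct k
          = ∑ k ∈ Finset.range (m+1), (((k:ℚ)+1) * cb (k+1)/4) * ct (m-k) :=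
        (conv_rev (fun k => ((k:ℚ)+1) * cb (k+1)/4) ct m).symm
      have e2 : ∑ k ∈ Finset.range (m+1), ((4:ℚ)^(m-k)/2) * ct k
          = ∑ k ∈ Finset.range (m+1), ((4:ℚ)^k/2) * ct (m-k) :=
        (conv_rev (fun k => (4:ℚ)^k/2) ct m).symm
      rw [e1, e2, sub_self]
      have hG : Gq (m+1) = ∑ k ∈ Finset.range (m+1), (((k:ℚ)+1) * cb (k+1)) * ct (m-k) := by
        rw [Gq, Finset.sum_range_succ']
        have h0 : ((0:ℕ):ℚ) * cb 0 * ct (m+1-0) = 0 := by push_cast; ring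
        rw [h0, add_zero]
        refine Finset.sum_congr rfl fun k _ => ?_
        rw [Nat.succ_sub_succ]
        push_cast
        ring
      have hG4 : ∑ k ∈ Finset.range (m+1), (((k:ℚ)+1) * cb (k+1)/4) * ct (m-k)
          = Gq (m+1) / 4 := by
        rw [hG, Finset.sum_div]
        exact Finset.sum_congr rfl fun k _ => by ring
      rw [hG4, Gq_eq (m+1)]
      push_cast
      ring

end PlaneTree
namespace PlaneTree

lemma list_sum_map_constQ {α : Type*} (l : List α) (c : ℚ) :
    (l.map fun _ => c).sum = l.length * c := by
  induction l with
  | nil => simp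
  | cons a l ih => simp [ih]; ring

lemma list_sum_cast {α : Type*} (l : List α) (g : α → ℕ) :
    (l.map (fun x => (g x : ℚ))).sum = ((l.map g).sum : ℚ) := by
  induction l with
  | nil => simp
  | cons a l ih => simp [ih]

/-- the finset of all trees of size n -/
noncomputable def treeFinset (n : ℕ) : Finset PlaneTree :=
  ⟨(allTrees n : Multiset PlaneTree), Multiset.coe_nodup.2 (nodup_allTrees n)⟩

lemma treeFinset_sum (n : ℕ) (f : PlaneTree → ℚ) :
    (treeFinset n).sum f = ((allTrees n).map f).sum := by
  rw [treeFinset, Finset.sum]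
  simp

lemma finsum_size_eq (f : PlaneTree → ℚ) (n : ℕ) :
    (∑ᶠ T : {T : PlaneTree // T.size = n}, f T.1) = ((allTrees n).map f).sum := by
  have h1 := finsum_subtype_eq_finsum_cond (f := f) (fun T : PlaneTree => T.size = n)
  rw [h1]
  have hset : {i : PlaneTree | size i = n} = (↑(treeFinset n) : Set PlaneTree) := by
    ext T
    simp only [Set.mem_setOf_eq, Finset.coe_mem, Finset.mem_coe]
    rw [treeFinset, Finset.mem_mk, Multiset.mem_coe, mem_allTrees]
  have h2 : (∑ᶠ (i : PlaneTree) (_ : size i = n), f i)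
      = ∑ᶠ (i : PlaneTree) (_ : i ∈ {i : PlaneTree | size i = n}), f i := rfl
  rw [h2, hset, finsum_mem_coe_finset, treeFinset_sum]

lemma sum_dep_allTrees (m : ℕ) : ((allTrees (m+1)).map dep).sum = FS m := by
  rw [allTrees, List.map_map, FS]
  refine list_sum_map_congr fun G _ => ?_
  show dep (node G) = fdep G
  rw [dep_node]; rfl

lemma sum_dep2_allTrees (m : ℕ) : ((allTrees (m+1)).map dep2).sum = FV m := by
  rw [allTrees, List.map_map, FV]
  refine list_sum_map_congr fun G _ => ?_
  show dep2 (node G) = fdep2 G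
  rw [dep2_node]; rfl

lemma length_allTrees (m : ℕ) : (allTrees (m+1)).length = catalan m := by
  rw [allTrees, List.length_map, ← cnt_eq_catalan]; rfl

lemma sum_vE_allTrees (m : ℕ) :
    2 * ((allTrees (m+1)).map verticalEdges).sum = FV m + FS m := by
  rw [← list_sum_map_mul]
  rw [list_sum_map_congr (fun T _ => two_mul_verticalEdges T)]
  rw [list_sum_map_add, sum_dep_allTrees, sum_dep2_allTrees]

lemma choose_two (m : ℕ) : 2 * ((m+1).choose 2) = (m+1) * m := by
  rw [Nat.choose_two_right, Nat.add_sub_cancel]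
  obtain ⟨c, hc⟩ := Nat.even_mul_succ_self m
  have h2 : (m+1) * m = 2 * c := by
    rw [mul_comm]
    omega
  rw [h2]
  omega

end PlaneTree

theorem total_paths_eq_total_vertical_edges_plane_trees (n : ℕ) (hn : 2 ≤ n) :
    (∑ᶠ T : {T : PlaneTree // T.size = n}, (T.1.pathCount : ℚ))
        = (∑ᶠ T : {T : PlaneTree // T.size = n}, (T.1.verticalEdges : ℚ)) ∧
      (∑ᶠ T : {T : PlaneTree // T.size = n}, (T.1.pathCount : ℚ))
        = (n.choose 2 : ℚ) * ((1 / (n : ℚ)) * ((2 * n - 2).choose (n - 1) : ℚ)) := by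
  obtain ⟨m, rfl⟩ : ∃ m, n = m + 1 := ⟨n - 1, by omega⟩
  open PlaneTree in
  -- path count sum
  have hP : (∑ᶠ T : {T : PlaneTree // T.size = m+1}, (T.1.pathCount : ℚ))
      = PlaneTree.ct m * (((m+1).choose 2 : ℕ) : ℚ) := by
    rw [PlaneTree.finsum_size_eq (fun T => (T.pathCount : ℚ)) (m+1)]
    have hc : ∀ T ∈ PlaneTree.allTrees (m+1),
        ((T.pathCount : ℚ)) = (((m+1).choose 2 : ℕ) : ℚ) := by
      intro T hT
      rw [PlaneTree.pathCount_eq, (PlaneTree.mem_allTrees _ _).1 hT]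
    rw [PlaneTree.list_sum_map_congr hc, PlaneTree.list_sum_map_constQ,
      PlaneTree.length_allTrees]
    rw [PlaneTree.ct]
  -- vertical edges sum
  have hV : 2 * (∑ᶠ T : {T : PlaneTree // T.size = m+1}, (T.1.verticalEdges : ℚ))
      = (PlaneTree.FV m : ℚ) + (PlaneTree.FS m : ℚ) := by
    rw [PlaneTree.finsum_size_eq (fun T => (T.verticalEdges : ℚ)) (m+1)]
    rw [PlaneTree.list_sum_cast]
    have h : ((2 * ((PlaneTree.allTrees (m+1)).map PlaneTree.verticalEdges).sum : ℕ) : ℚ)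
        = ((PlaneTree.FV m + PlaneTree.FS m : ℕ) : ℚ) := by
      rw [PlaneTree.sum_vE_allTrees m]
    push_cast at h ⊢
    linarith [h]
  -- numeric identities
  have hchoose : (((m+1).choose 2 : ℕ) : ℚ) * 2 = ((m:ℚ)+1) * m := by
    have h := congrArg (fun x : ℕ => (x : ℚ)) (PlaneTree.choose_two m)
    push_cast at h
    linarith [h]
  have hcbsucc : ((m:ℚ)+1) * PlaneTree.cb (m+1) = 2*(2*(m:ℚ)+1) * PlaneTree.cb m := by
    have := Nat.succ_mul_centralBinom_succ m
    rw [PlaneTree.cb, PlaneTree.cb]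
    exact_mod_cast congrArg (fun x : ℕ => (x:ℚ)) this
  have hm1 : ((m:ℚ)+1) ≠ 0 := by positivity
  constructor
  · -- equality of the two sums
    have h2 : 2 * (∑ᶠ T : {T : PlaneTree // T.size = m+1}, (T.1.pathCount : ℚ))
        = 2 * (∑ᶠ T : {T : PlaneTree // T.size = m+1}, (T.1.verticalEdges : ℚ)) := by
      rw [hV, hP, PlaneTree.FVq m, PlaneTree.FSq m]
      have hct : PlaneTree.cb m = ((m:ℚ)+1) * PlaneTree.ct m := PlaneTree.cb_eq_ct m
      linear_combination PlaneTree.ct m * hchoose - (1/4 : ℚ) * hcbsucc - (m:ℚ) * hct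
    linarith [h2]
  · -- the closed form
    rw [hP]
    have hcb2 : (((2 * (m+1) - 2).choose ((m+1) - 1) : ℕ) : ℚ) = PlaneTree.cb m := by
      have e1 : 2 * (m+1) - 2 = 2 * m := by omega
      have e2 : (m+1) - 1 = m := by omega
      rw [e1, e2, PlaneTree.cb, Nat.centralBinom]
    rw [hcb2]
    have hct : PlaneTree.cb m = ((m:ℚ)+1) * PlaneTree.ct m := PlaneTree.cb_eq_ct m
    rw [hct]
    have hc : ((m+1 : ℕ) : ℚ) = (m:ℚ)+1 := by push_cast; ring
    rw [hc]
    field_simp
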